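/- Let G be a finite group admitting a normal series P' ⊴ H' ⊴ G where P' is a p-group, H'/P' is cyclic, and G/H' is a q-group. Then there exists a normal series P ⊴ H ⊴ G such that P is a p-group, H/P is cyclic, G/H is a q-group, and neither p nor q divides the order of H/P. -/

import Mathlib

/-- For a normal subgroup `P` and any subgroup `K`, the quotient `K ⧸ P.subgroupOf K`
is isomorphic to the image of `K` in `G ⧸ P`. -/
noncomputable def mapQuotEquiv {G : Type*} [Group G] (P : Subgroup G) [P.Normal]
    (K : Subgroup G) :
    K ⧸ P.subgroupOf K ≃* Subgroup.map (QuotientGroup.mk' P) K :=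
  ((QuotientGroup.quotientMulEquivOfEq
      (by rw [MonoidHom.ker_domRestrict, QuotientGroup.ker_mk'])).symm.trans
    (QuotientGroup.quotientKerEquivRange ((QuotientGroup.mk' P).domRestrict K))).trans
    (MulEquiv.subgroupCongr (MonoidHom.domRestrict_range (K := K) (QuotientGroup.mk' P)))

theorem stmt_1 {G : Type*} [Group G] [Finite G] (p q : ℕ) (hp : p.Prime) (hq : q.Prime)
    (P' H' : Subgroup G) (hPH' : P' ≤ H')
    [hP'n : (P'.subgroupOf H').Normal] [hH'n : H'.Normal]
    (hP' : IsPGroup p P') (hcyc' : IsCyclic (H' ⧸ P'.subgroupOf H'))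
    (hQ' : IsPGroup q (G ⧸ H')) :
    ∃ (P H : Subgroup G) (_ : P ≤ H) (hPn : (P.subgroupOf H).Normal) (hHn : H.Normal),
      IsPGroup p P ∧
      (letI := hPn; letI := hHn;
        IsCyclic (H ⧸ P.subgroupOf H) ∧ IsPGroup q (G ⧸ H) ∧
        ¬ p ∣ Nat.card (H ⧸ P.subgroupOf H) ∧ ¬ q ∣ Nat.card (H ⧸ P.subgroupOf H)) := by
  haveI := Fact.mk hp
  haveI := Fact.mk hq
  -- `K` is the cyclic quotient `H'/P'`
  set K := H' ⧸ P'.subgroupOf H' with hK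
  have hcomm : ∀ a b : K, Commute a b := by
    obtain ⟨γ, hγ⟩ := hcyc'.exists_generator
    intro a b
    obtain ⟨i, rfl⟩ := hγ a
    obtain ⟨j, rfl⟩ := hγ b
    exact Commute.zpow_zpow (Commute.refl γ) i j
  -- a Sylow `p`-subgroup of `K`; it is normal since `K` is commutative
  let S : Sylow p K := default
  haveI hSnorm : (S : Subgroup K).Normal := by
    constructor
    intro n hn g
    have : g * n * g⁻¹ = n := by
      rw [(hcomm g n).eq, mul_assoc, mul_inv_cancel, mul_one]
    rwa [this]
  -- pull back to `H'`
  let mk1 : H' →* K := QuotientGroup.mk' (P'.subgroupOf H')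
  have hker1 : IsPGroup p mk1.ker := by
    rw [QuotientGroup.ker_mk']
    exact hP'.of_equiv (Subgroup.subgroupOfEquivOfLe hPH').symm
  set P₁ : Subgroup H' := (S : Subgroup K).comap mk1 with hP₁
  have hP₁grp : IsPGroup p P₁ := S.2.comap_of_ker_isPGroup mk1 hker1
  have hP₁idx : ¬ p ∣ P₁.index := by
    rw [hP₁, Subgroup.index_comap_of_surjective (S : Subgroup K) (QuotientGroup.mk'_surjective _)]
    exact S.not_dvd_index
  haveI hP₁norm : P₁.Normal := hSnorm.comap mk1
  -- `P₁` is a normal, hence characteristic, Sylow subgroup of `H'`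
  haveI hP₁char : P₁.Characteristic :=
    Sylow.characteristic_of_normal (hP₁grp.toSylow hP₁idx) hP₁norm
  set P : Subgroup G := P₁.map H'.subtype with hPdef
  haveI hPnorm : P.Normal := ConjAct.normal_of_characteristic_of_normal
  have hPgrp : IsPGroup p P := hP₁grp.map _
  have hPle : P ≤ H' := Subgroup.map_subtype_le P₁
  have hsub : P.subgroupOf H' = P₁ :=
    Subgroup.comap_map_eq_self_of_injective H'.subtype_injective P₁
  -- pass to the quotient `G ⧸ P`
  set φ : G →* G ⧸ P := QuotientGroup.mk' P with hφ
  set Hbar : Subgroup (G ⧸ P) := H'.map φ with hHbar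
  haveI hHbarNorm : Hbar.Normal := hH'n.map φ (QuotientGroup.mk'_surjective P)
  have e1 : (H' ⧸ P.subgroupOf H') ≃* Hbar := mapQuotEquiv P H'
  set N : ℕ := Nat.card Hbar with hNdef
  have hNidx : P₁.index = N := by
    rw [hNdef, ← Nat.card_congr e1.toEquiv, ← hsub, ← Subgroup.index_eq_card]
  have hpN : ¬ p ∣ N := hNidx ▸ hP₁idx
  have hN0 : N ≠ 0 := Nat.card_pos.ne'
  -- `Hbar` is cyclic
  haveI hcycH' : IsCyclic (H' ⧸ P.subgroupOf H') := by
    have hle : P'.subgroupOf H' ≤ P.subgroupOf H' := by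
      rw [hsub]
      intro x hx
      show mk1 x ∈ (S : Subgroup K)
      have hx1 : mk1 x = 1 := by
        rw [← MonoidHom.mem_ker, QuotientGroup.ker_mk']
        exact hx
      rw [hx1]
      exact Subgroup.one_mem _
    refine isCyclic_of_surjective
      (QuotientGroup.map (P'.subgroupOf H') (P.subgroupOf H') (MonoidHom.id H')
        (by simpa using hle)) ?_
    rintro ⟨y⟩
    exact ⟨QuotientGroup.mk y, rfl⟩
  haveI hcycHbar : IsCyclic Hbar := isCyclic_of_surjective e1 e1.surjective
  obtain ⟨h0, hh0⟩ := hcycHbar.exists_generator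
  set u : G ⧸ P := (h0 : G ⧸ P) with hu
  have hord : orderOf u = N := by
    rw [hu, Subgroup.orderOf_coe, orderOf_eq_card_of_forall_mem_zpowers hh0]
  have hHbarzp : Hbar = Subgroup.zpowers u := by
    refine le_antisymm ?_ ((Subgroup.zpowers_le).mpr h0.2)
    intro x hx
    obtain ⟨k, hk⟩ := hh0 ⟨x, hx⟩
    refine ⟨k, ?_⟩
    have := congrArg (fun y : Hbar => (y : G ⧸ P)) hk
    simpa using this
  -- the cyclic subgroup of order `m` (`q`-free part of `N`)
  set b : ℕ := N.factorization q with hb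
  set m : ℕ := N / q ^ b with hm
  have hqbN : q ^ b ∣ N := Nat.ordProj_dvd N q
  have hmdvd : m ∣ N := Nat.div_dvd_of_dvd hqbN
  have hqm : ¬ q ∣ m := Nat.not_dvd_ordCompl hq hN0
  have hpm : ¬ p ∣ m := fun h => hpN (h.trans hmdvd)
  have hm0 : m ≠ 0 := (Nat.ordCompl_pos q hN0).ne'
  set T : Subgroup (G ⧸ P) := Subgroup.zpowers (u ^ q ^ b) with hT
  have hcardT : Nat.card T = m := by
    rw [hT, Nat.card_zpowers, orderOf_pow, hord, Nat.gcd_eq_right hqbN]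
  haveI hTnorm : T.Normal := by
    constructor
    intro n hn c
    obtain ⟨k, hk⟩ := hn
    have hcu : c * u * c⁻¹ ∈ Hbar := hHbarNorm.conj_mem u h0.2 c
    rw [hHbarzp] at hcu
    obtain ⟨j, hj⟩ := hcu
    refine ⟨j * k, ?_⟩
    show (u ^ q ^ b) ^ (j * k) = c * n * c⁻¹
    have hcn : c * n * c⁻¹ = ((u ^ j) ^ q ^ b) ^ k := by
      have h1 : c * n * c⁻¹ = (MulAut.conj c) n := rfl
      rw [h1, ← hk]
      show (MulAut.conj c) ((u ^ q ^ b) ^ k) = _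
      rw [map_zpow, map_pow]
      congr 2
      exact hj.symm
    rw [hcn, ← zpow_natCast u (q ^ b), ← zpow_natCast (u ^ j) (q ^ b), ← zpow_mul, ← zpow_mul,
      ← zpow_mul]
    congr 1
    ring
  set H : Subgroup G := T.comap φ with hH
  have hPHle : P ≤ H := by
    intro x hx
    show φ x ∈ T
    have : φ x = 1 := by
      rw [← MonoidHom.mem_ker, hφ, QuotientGroup.ker_mk']
      exact hx
    rw [this]
    exact Subgroup.one_mem _
  haveI hHn : H.Normal := hTnorm.comap φ
  haveI hPn : (P.subgroupOf H).Normal := Subgroup.normal_subgroupOf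
  have hmapH : Subgroup.map φ H = T :=
    Subgroup.map_comap_eq_self_of_surjective (QuotientGroup.mk'_surjective P) (H := T)
  have e3 : (H ⧸ P.subgroupOf H) ≃* T :=
    (mapQuotEquiv P H).trans (MulEquiv.subgroupCongr hmapH)
  have hcycT : IsCyclic T := by
    refine ⟨⟨u ^ q ^ b, Subgroup.mem_zpowers _⟩, ?_⟩
    rintro ⟨x, k, rfl⟩
    exact ⟨k, by ext; simp⟩
  have hcyc : IsCyclic (H ⧸ P.subgroupOf H) :=
    isCyclic_of_surjective e3.symm e3.symm.surjective
  have hcard : Nat.card (H ⧸ P.subgroupOf H) = m := by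
    rw [Nat.card_congr e3.toEquiv, hcardT]
  -- `G ⧸ H` is a q-group
  obtain ⟨γ, hγ⟩ := IsPGroup.iff_card.mp hQ'
  have hPidx : P.index = N * q ^ γ := by
    have hrel : P.relIndex H' = N := by
      show (P.subgroupOf H').index = N
      rw [hsub, hNidx]
    have hidx' : H'.index = q ^ γ := by rw [Subgroup.index_eq_card]; exact hγ
    rw [← Subgroup.relIndex_mul_index hPle, hrel, hidx']
  have hTidx : T.index = q ^ (b + γ) := by
    have h2 : Nat.card T * T.index = Nat.card (G ⧸ P) := Subgroup.card_mul_index T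
    rw [hcardT, ← Subgroup.index_eq_card, hPidx] at h2
    have h3 : N = q ^ b * m := (Nat.ordProj_mul_ordCompl_eq_self N q).symm
    rw [h3] at h2
    have h4 : m * T.index = m * q ^ (b + γ) := by
      rw [pow_add, h2]
      ring
    exact Nat.eq_of_mul_eq_mul_left (Nat.pos_of_ne_zero hm0) h4
  have hqgrp : IsPGroup q (G ⧸ H) := by
    rw [IsPGroup.iff_card]
    refine ⟨b + γ, ?_⟩
    rw [← Subgroup.index_eq_card, hH,
      Subgroup.index_comap_of_surjective T (QuotientGroup.mk'_surjective P), hTidx]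
  exact ⟨P, H, hPHle, hPn, hHn, hPgrp, hcyc, hqgrp,
    by rw [hcard]; exact hpm, by rw [hcard]; exact hqm⟩
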